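/- For r ≥ 1 and an ab-word w of degree k−1, the Eulerian generating function identity holds: ∑_{n≥0} (−1)^n β(( a^{r−1} b )^n · w) · x^{rn+k}/(rn+k)! = ( ∑_{n≥0} β(a^{rn}·w) · x^{rn+k}/(rn+k)! ) / ( ∑_{n≥0} x^{rn}/(rn)! ), where β(u) counts permutations with descent word u (so β(a^{rn}·w) counts permutations of S_{rn+k} whose first rn positions are ascents and whose last k−1 descent positions follow w). -/

import Mathlib

/-- The descent word of a permutation of `Fin N` (`false` = letter `a` = ascent,
`true` = letter `b` = descent). -/
def descWord {N : ℕ} (σ : Equiv.Perm (Fin N)) : List Bool :=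
  List.ofFn fun i : Fin (N - 1) =>
    decide (σ ⟨i.1 + 1, by have := i.2; omega⟩ < σ ⟨i.1, by have := i.2; omega⟩)

/-- `β(w)`: the number of permutations of `S_{deg w + 1}` with descent word `w`. -/
noncomputable def desNum (w : List Bool) : ℕ :=
  Nat.card {σ : Equiv.Perm (Fin (w.length + 1)) // descWord σ = w}

/-- The ab-word `(a^{r−1} b)^n`. -/
def abPow (r n : ℕ) : List Bool :=
  (List.replicate n (List.replicate (r - 1) false ++ [true])).flatten

lemma descWord_length {N : ℕ} (σ : Equiv.Perm (Fin N)) : (descWord σ).length = N - 1 := by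
  simp [descWord]

lemma descWord_getD {N : ℕ} (σ : Equiv.Perm (Fin N)) (i : ℕ) (h : i < N - 1) :
    (descWord σ).getD i false =
      decide (σ ⟨i + 1, by omega⟩ < σ ⟨i, by omega⟩) := by
  rw [List.getD_eq_getElem _ _ (by simpa [descWord_length] using h)]
  simp [descWord]

lemma descWord_eq_iff {N : ℕ} (σ : Equiv.Perm (Fin N)) (u : List Bool) (hu : u.length = N - 1) :
    descWord σ = u ↔ ∀ i (h : i < N - 1),
      u.getD i false = decide (σ ⟨i + 1, by omega⟩ < σ ⟨i, by omega⟩) := by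
  constructor
  · rintro rfl i h
    exact descWord_getD σ i h
  · intro h
    apply List.ext_getElem (by rw [descWord_length, hu])
    intro i h1 h2
    have hi : i < N - 1 := by rwa [descWord_length] at h1
    rw [← List.getD_eq_getElem _ false h1, ← List.getD_eq_getElem _ false h2,
      descWord_getD σ i hi, h i hi]

lemma desNum_eq (w : List Bool) (M : ℕ) (h : w.length + 1 = M) :
    desNum w = Nat.card {σ : Equiv.Perm (Fin M) // descWord σ = w} := by
  subst h; rfl

def QPred (p : ℕ) (v : List Bool) (σ : Equiv.Perm (Fin (p + v.length + 1))) : Prop :=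
  (∀ i, (h : i < p - 1) → ¬ (σ ⟨i + 1, by omega⟩ < σ ⟨i, by omega⟩)) ∧
  (∀ i, (h : i < v.length) → decide (σ ⟨p + i + 1, by omega⟩ < σ ⟨p + i, by omega⟩)
      = v.getD i false)

instance (p : ℕ) (v : List Bool) : DecidablePred (QPred p v) := fun _ => by
  unfold QPred; infer_instance

lemma mono_aux {β : Type*} [Preorder β] (f : ℕ → β) (p : ℕ)
    (h : ∀ i, i + 1 < p → f i < f (i + 1)) :
    ∀ a b, b < p → a < b → f a < f b := by
  intro a b hb hab
  induction b with
  | zero => omega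
  | succ b ih =>
    rcases Nat.lt_or_ge a b with h' | h'
    · exact lt_trans (ih (by omega) h') (h b hb)
    · have : a = b := by omega
      subst this
      exact h a hb

section CardQ

variable (p : ℕ) (v : List Bool)

lemma compl_card (S : Finset (Fin (p + v.length + 1))) (hS : S.card = p) :
    Sᶜ.card = v.length + 1 := by
  rw [Finset.card_compl, Fintype.card_fin, hS]; omega

/-- The permutation built from a `p`-subset and a pattern. -/
def fAux (S : Finset (Fin (p + v.length + 1))) (hS : S.card = p)
    (τ : Equiv.Perm (Fin (v.length + 1))) :
    Fin (p + v.length + 1) → Fin (p + v.length + 1) := fun i =>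
  if h : (i : ℕ) < p then S.orderEmbOfFin hS ⟨i, h⟩
  else Sᶜ.orderEmbOfFin (compl_card p v S hS) (τ ⟨(i : ℕ) - p, by have := i.2; omega⟩)

lemma fAux_apply_lt (S : Finset (Fin (p + v.length + 1))) (hS : S.card = p)
    (τ : Equiv.Perm (Fin (v.length + 1))) (i : Fin (p + v.length + 1)) (h : (i : ℕ) < p) :
    fAux p v S hS τ i = S.orderEmbOfFin hS ⟨i, h⟩ := dif_pos h

lemma fAux_apply_ge (S : Finset (Fin (p + v.length + 1))) (hS : S.card = p)
    (τ : Equiv.Perm (Fin (v.length + 1))) (i : Fin (p + v.length + 1)) (h : ¬ ((i : ℕ) < p)) :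
    fAux p v S hS τ i
      = Sᶜ.orderEmbOfFin (compl_card p v S hS) (τ ⟨(i : ℕ) - p, by have := i.2; omega⟩) :=
  dif_neg h

lemma fAux_bij (S : Finset (Fin (p + v.length + 1))) (hS : S.card = p)
    (τ : Equiv.Perm (Fin (v.length + 1))) : Function.Bijective (fAux p v S hS τ) := by
  rw [Finite.injective_iff_bijective.symm]
  intro i j hij
  by_cases hi : (i : ℕ) < p <;> by_cases hj : (j : ℕ) < p
  · rw [fAux_apply_lt p v S hS τ i hi, fAux_apply_lt p v S hS τ j hj] at hij
    have := (S.orderEmbOfFin hS).injective hij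
    have h' : ((⟨(i : ℕ), hi⟩ : Fin p) : ℕ) = ((⟨(j : ℕ), hj⟩ : Fin p) : ℕ) := by rw [this]
    exact Fin.ext h'
  · rw [fAux_apply_lt p v S hS τ i hi, fAux_apply_ge p v S hS τ j hj] at hij
    have h1 := Finset.orderEmbOfFin_mem S hS ⟨i, hi⟩
    have h2 := Finset.orderEmbOfFin_mem Sᶜ (compl_card p v S hS)
      (τ ⟨(j : ℕ) - p, by have := j.2; omega⟩)
    rw [hij] at h1
    exact absurd h1 (Finset.mem_compl.mp h2)
  · rw [fAux_apply_ge p v S hS τ i hi, fAux_apply_lt p v S hS τ j hj] at hij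
    have h1 := Finset.orderEmbOfFin_mem S hS ⟨j, hj⟩
    have h2 := Finset.orderEmbOfFin_mem Sᶜ (compl_card p v S hS)
      (τ ⟨(i : ℕ) - p, by have := i.2; omega⟩)
    rw [← hij] at h1
    exact absurd h1 (Finset.mem_compl.mp h2)
  · rw [fAux_apply_ge p v S hS τ i hi, fAux_apply_ge p v S hS τ j hj] at hij
    have := τ.injective ((Sᶜ.orderEmbOfFin (compl_card p v S hS)).injective hij)
    have := congrArg Fin.val this
    simp only at this
    exact Fin.ext (by omega)

lemma qpred_fAux (S : Finset (Fin (p + v.length + 1))) (hS : S.card = p)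
    (τ : Equiv.Perm (Fin (v.length + 1))) (hτ : descWord τ = v) :
    QPred p v (Equiv.ofBijective _ (fAux_bij p v S hS τ)) := by
  have key : ∀ j, (Equiv.ofBijective _ (fAux_bij p v S hS τ)) j = fAux p v S hS τ j :=
    fun _ => rfl
  constructor
  · intro i hi
    have e1 : Equiv.ofBijective _ (fAux_bij p v S hS τ) ⟨i + 1, by omega⟩
        = S.orderEmbOfFin hS ⟨i + 1, by omega⟩ := by
      rw [key]; exact fAux_apply_lt p v S hS τ _ (by simp only [Fin.val_mk]; omega)
    have e2 : Equiv.ofBijective _ (fAux_bij p v S hS τ) ⟨i, by omega⟩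
        = S.orderEmbOfFin hS ⟨i, by omega⟩ := by
      rw [key]; exact fAux_apply_lt p v S hS τ _ (by simp only [Fin.val_mk]; omega)
    rw [e1, e2]
    exact not_lt_of_gt ((S.orderEmbOfFin hS).strictMono (by exact Fin.mk_lt_mk.mpr (by omega)))
  · intro i hi
    have e1 : Equiv.ofBijective _ (fAux_bij p v S hS τ) ⟨p + i + 1, by omega⟩
        = Sᶜ.orderEmbOfFin (compl_card p v S hS) (τ ⟨i + 1, by omega⟩) := by
      rw [key, fAux_apply_ge p v S hS τ _ (by simp only [Fin.val_mk]; omega)]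
      congr 2
      exact Fin.ext (by simp only [Fin.val_mk]; omega)
    have e2 : Equiv.ofBijective _ (fAux_bij p v S hS τ) ⟨p + i, by omega⟩
        = Sᶜ.orderEmbOfFin (compl_card p v S hS) (τ ⟨i, by omega⟩) := by
      rw [key, fAux_apply_ge p v S hS τ _ (by simp only [Fin.val_mk]; omega)]
      congr 2
      exact Fin.ext (by simp only [Fin.val_mk]; omega)
    rw [e1, e2]
    have : (Sᶜ.orderEmbOfFin (compl_card p v S hS) (τ ⟨i + 1, by omega⟩)
        < Sᶜ.orderEmbOfFin (compl_card p v S hS) (τ ⟨i, by omega⟩))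
        ↔ (τ ⟨i + 1, by omega⟩ < τ ⟨i, by omega⟩) :=
      (Sᶜ.orderEmbOfFin (compl_card p v S hS)).lt_iff_lt
    rw [decide_eq_decide.mpr this]
    have := (descWord_eq_iff τ v (by omega)).mp hτ i (by omega)
    exact this.symm

/-- The map from (set, pattern) pairs to permutations. -/
noncomputable def Bmap :
    ({S : Finset (Fin (p + v.length + 1)) // S.card = p} ×
      {τ : Equiv.Perm (Fin (v.length + 1)) // descWord τ = v}) →
    {σ : Equiv.Perm (Fin (p + v.length + 1)) // QPred p v σ} := fun x =>
  ⟨Equiv.ofBijective _ (fAux_bij p v x.1.1 x.1.2 x.2.1),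
    qpred_fAux p v x.1.1 x.1.2 x.2.1 x.2.2⟩

lemma Bmap_inj : Function.Injective (Bmap p v) := by
  rintro ⟨⟨S, hS⟩, ⟨τ, hτ⟩⟩ ⟨⟨S', hS'⟩, ⟨τ', hτ'⟩⟩ heq
  have hperm : Equiv.ofBijective _ (fAux_bij p v S hS τ)
      = Equiv.ofBijective _ (fAux_bij p v S' hS' τ') := congrArg Subtype.val heq
  have happ : ∀ j, fAux p v S hS τ j = fAux p v S' hS' τ' j := fun j => by
    have := congrArg (fun e => e j) hperm
    simpa using this
  -- first components agree
  have hSS : S = S' := by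
    apply Finset.eq_of_subset_of_card_le
    · intro s hs
      obtain ⟨j, hj⟩ := (S.orderIsoOfFin hS).surjective ⟨s, hs⟩
      have h1 : fAux p v S hS τ ⟨(j : ℕ), by omega⟩ = s := by
        rw [fAux_apply_lt p v S hS τ _ (by simp only [Fin.val_mk]; exact j.2)]
        have : (⟨((⟨(j : ℕ), by omega⟩ : Fin (p + v.length + 1)) : ℕ), by
            simp only [Fin.val_mk]; exact j.2⟩ : Fin p) = j := Fin.ext (by simp)
        rw [this]
        exact congrArg Subtype.val hj
      rw [happ _] at h1
      rw [fAux_apply_lt p v S' hS' τ' _ (by simp only [Fin.val_mk]; exact j.2)] at h1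
      rw [← h1]
      exact Finset.orderEmbOfFin_mem _ _ _
    · rw [hS, hS']
  subst hSS
  have hττ : τ = τ' := by
    apply Equiv.ext
    intro j
    have h1 := happ ⟨p + (j : ℕ), by omega⟩
    rw [fAux_apply_ge p v S hS τ _ (by simp only [Fin.val_mk]; omega),
      fAux_apply_ge p v S hS τ' _ (by simp only [Fin.val_mk]; omega)] at h1
    have h2 := (Sᶜ.orderEmbOfFin (compl_card p v S hS)).injective h1
    have h3 : (⟨((⟨p + (j : ℕ), by omega⟩ : Fin (p + v.length + 1)) : ℕ) - p, by
        have := j.2; simp only [Fin.val_mk]; omega⟩ : Fin (v.length + 1)) = j :=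
      Fin.ext (by simp)
    rwa [h3] at h2
  subst hττ
  simp


lemma orderEmbOfFin_congr {α : Type*} [LinearOrder α] {S S' : Finset α} (h : S = S') {k : ℕ}
    (hS : S.card = k) (hS' : S'.card = k) (x : Fin k) :
    S.orderEmbOfFin hS x = S'.orderEmbOfFin hS' x := by subst h; rfl

/-- The first `p` indices. -/
def Sfin : Finset (Fin (p + v.length + 1)) := Finset.univ.filter fun i => (i : ℕ) < p

lemma Sfin_card : (Sfin p v).card = p := by
  have : Sfin p v = Finset.map (Fin.castLEEmb (by omega : p ≤ p + v.length + 1))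
      Finset.univ := by
    ext i
    simp only [Sfin, Finset.mem_filter, Finset.mem_univ, true_and, Finset.mem_map,
      Fin.castLEEmb_apply]
    constructor
    · intro h; exact ⟨⟨(i : ℕ), h⟩, Fin.ext rfl⟩
    · rintro ⟨a, rfl⟩; simpa using a.2
  rw [this, Finset.card_map, Finset.card_univ, Fintype.card_fin]

/-- The image of the first `p` indices. -/
def imgS (σ : Equiv.Perm (Fin (p + v.length + 1))) : Finset (Fin (p + v.length + 1)) :=
  Finset.image σ (Sfin p v)

lemma imgS_card (σ : Equiv.Perm (Fin (p + v.length + 1))) : (imgS p v σ).card = p := by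
  rw [imgS, Finset.card_image_of_injective _ σ.injective, Sfin_card]

lemma tail_mem (σ : Equiv.Perm (Fin (p + v.length + 1))) (i : ℕ) (hpi : p ≤ i)
    (h : i < p + v.length + 1) : σ ⟨i, h⟩ ∈ (imgS p v σ)ᶜ := by
  rw [Finset.mem_compl, imgS, Finset.mem_image]
  rintro ⟨x, hx, he⟩
  have hxp : (x : ℕ) < p := by
    simpa [Sfin] using hx
  have := σ.injective he
  subst this
  simp at hxp
  omega

/-- The standardization of the tail of `σ`. -/
noncomputable def gAux (σ : Equiv.Perm (Fin (p + v.length + 1))) :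
    Fin (v.length + 1) → Fin (v.length + 1) := fun j =>
  (((imgS p v σ)ᶜ).orderIsoOfFin (compl_card p v _ (imgS_card p v σ))).symm
    ⟨σ ⟨p + (j : ℕ), by have := j.2; omega⟩, tail_mem p v σ _ (by omega) (by have := j.2; omega)⟩

lemma gAux_bij (σ : Equiv.Perm (Fin (p + v.length + 1))) : Function.Bijective (gAux p v σ) := by
  rw [Finite.injective_iff_bijective.symm]
  intro a b hab
  unfold gAux at hab
  have h1 := (((imgS p v σ)ᶜ).orderIsoOfFin
    (compl_card p v _ (imgS_card p v σ))).symm.injective hab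
  have h2 : σ ⟨p + (a : ℕ), by have := a.2; omega⟩ = σ ⟨p + (b : ℕ), by have := b.2; omega⟩ :=
    congrArg Subtype.val h1
  have := congrArg Fin.val (σ.injective h2)
  simp only [Fin.val_mk] at this
  exact Fin.ext (by omega)

lemma tail_eq (σ : Equiv.Perm (Fin (p + v.length + 1))) (j : Fin (v.length + 1)) :
    σ ⟨p + (j : ℕ), by have := j.2; omega⟩
      = ((imgS p v σ)ᶜ).orderEmbOfFin (compl_card p v _ (imgS_card p v σ)) (gAux p v σ j) := by
  rw [← Finset.coe_orderIsoOfFin_apply, gAux, OrderIso.apply_symm_apply]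


lemma head_strictMono (σ : Equiv.Perm (Fin (p + v.length + 1))) (hQ : QPred p v σ) :
    StrictMono (fun j : Fin p => σ ⟨(j : ℕ), by have := j.2; omega⟩) := by
  intro a b hab
  let f : ℕ → Fin (p + v.length + 1) := fun n =>
    if hn : n < p + v.length + 1 then σ ⟨n, hn⟩ else σ ⟨0, by omega⟩
  have adj : ∀ i, i + 1 < p → f i < f (i + 1) := by
    intro i hi
    have h1 : f i = σ ⟨i, by omega⟩ := dif_pos (by omega)
    have h2 : f (i + 1) = σ ⟨i + 1, by omega⟩ := dif_pos (by omega)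
    rw [h1, h2]
    have hnl := hQ.1 i (by omega)
    have hne : σ ⟨i, by omega⟩ ≠ σ ⟨i + 1, by omega⟩ := fun he => by
      have := congrArg Fin.val (σ.injective he); simp at this
    exact lt_of_le_of_ne (not_lt.mp hnl) hne
  have := mono_aux f p adj (a : ℕ) (b : ℕ) b.2 hab
  have ha : f (a : ℕ) = σ ⟨(a : ℕ), by have := a.2; omega⟩ := dif_pos (by have := a.2; omega)
  have hb : f (b : ℕ) = σ ⟨(b : ℕ), by have := b.2; omega⟩ := dif_pos (by have := b.2; omega)
  rwa [ha, hb] at this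

lemma head_eq (σ : Equiv.Perm (Fin (p + v.length + 1))) (hQ : QPred p v σ) (i : ℕ) (h : i < p)
    (hiN : i < p + v.length + 1) :
    σ ⟨i, hiN⟩ = (imgS p v σ).orderEmbOfFin (imgS_card p v σ) ⟨i, h⟩ := by
  have hu := Finset.orderEmbOfFin_unique (imgS_card p v σ)
    (f := fun j : Fin p => σ ⟨(j : ℕ), by have := j.2; omega⟩)
    (fun j => Finset.mem_image_of_mem _ (by simp [Sfin, j.2]))
    (head_strictMono p v σ hQ)
  exact congrFun hu ⟨i, h⟩

lemma descWord_gAux (σ : Equiv.Perm (Fin (p + v.length + 1))) (hQ : QPred p v σ) :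
    descWord (Equiv.ofBijective _ (gAux_bij p v σ)) = v := by
  rw [descWord_eq_iff _ v (by omega)]
  intro i hi
  have key : ∀ j, (Equiv.ofBijective _ (gAux_bij p v σ)) j = gAux p v σ j := fun _ => rfl
  rw [key, key]
  have hiff : gAux p v σ ⟨i + 1, by omega⟩ < gAux p v σ ⟨i, by omega⟩
      ↔ σ ⟨p + i + 1, by omega⟩ < σ ⟨p + i, by omega⟩ := by
    rw [gAux, gAux, OrderIso.lt_iff_lt]
    exact Subtype.mk_lt_mk
  rw [decide_eq_decide.mpr hiff]
  exact (hQ.2 i hi).symm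

/-- The map from permutations to (set, pattern) pairs. -/
noncomputable def Fmap : {σ : Equiv.Perm (Fin (p + v.length + 1)) // QPred p v σ} →
    ({S : Finset (Fin (p + v.length + 1)) // S.card = p} ×
      {τ : Equiv.Perm (Fin (v.length + 1)) // descWord τ = v}) := fun x =>
  (⟨imgS p v x.1, imgS_card p v x.1⟩,
   ⟨Equiv.ofBijective _ (gAux_bij p v x.1), descWord_gAux p v x.1 x.2⟩)

lemma Fmap_inj : Function.Injective (Fmap p v) := by
  rintro ⟨σ, hσ⟩ ⟨σ', hσ'⟩ heq
  have h1 : imgS p v σ = imgS p v σ' :=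
    congrArg (fun y => (y.1 : Finset (Fin (p + v.length + 1)))) heq
  have h2 : ∀ j, gAux p v σ j = gAux p v σ' j := fun j => by
    have := congrArg (fun y => (y.2 : Equiv.Perm (Fin (v.length + 1))) j) heq
    exact this
  apply Subtype.ext
  apply Equiv.ext
  intro i
  by_cases hip : (i : ℕ) < p
  · have e1 : σ i = σ ⟨(i : ℕ), i.2⟩ := by congr 1
    have e1' : σ' i = σ' ⟨(i : ℕ), i.2⟩ := by congr 1
    rw [e1, e1', head_eq p v σ hσ _ hip i.2, head_eq p v σ' hσ' _ hip i.2]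
    exact orderEmbOfFin_congr h1 _ _ _
  · set j : Fin (v.length + 1) := ⟨(i : ℕ) - p, by have := i.2; omega⟩ with hj
    have e1 : σ i = σ ⟨p + (j : ℕ), by have := j.2; omega⟩ := by
      congr 1; exact Fin.ext (by simp [hj]; omega)
    have e1' : σ' i = σ' ⟨p + (j : ℕ), by have := j.2; omega⟩ := by
      congr 1; exact Fin.ext (by simp [hj]; omega)
    rw [e1, e1', tail_eq p v σ j, tail_eq p v σ' j, h2 j]
    exact orderEmbOfFin_congr (by rw [h1]) _ _ _

lemma card_QPred (hp : 1 ≤ p) :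
    Nat.card {σ : Equiv.Perm (Fin (p + v.length + 1)) // QPred p v σ}
      = Nat.choose (p + v.length + 1) p * desNum v := by
  have hle1 := Nat.card_le_card_of_injective _ (Fmap_inj p v)
  have hle2 := Nat.card_le_card_of_injective _ (Bmap_inj p v)
  have hcard : Nat.card {σ : Equiv.Perm (Fin (p + v.length + 1)) // QPred p v σ}
      = Nat.card ({S : Finset (Fin (p + v.length + 1)) // S.card = p} ×
        {τ : Equiv.Perm (Fin (v.length + 1)) // descWord τ = v}) :=
    le_antisymm hle1 hle2
  rw [hcard, Nat.card_prod]
  have h1 : Nat.card {S : Finset (Fin (p + v.length + 1)) // S.card = p}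
      = Nat.choose (p + v.length + 1) p := by
    rw [Nat.card_eq_fintype_card, Fintype.card_finset_len, Fintype.card_fin]
  rw [h1]
  rfl

end CardQ

lemma getD_replicate' {α} (r n : ℕ) (d : α) : (List.replicate r d).getD n d = d := by
  rcases Nat.lt_or_ge n r with h | h
  · rw [List.getD_eq_getElem _ _ (by simpa using h)]; simp
  · rw [List.getD_eq_default _ _ (by simpa using h)]

lemma or_iff_QPred (p : ℕ) (hp : 1 ≤ p) (v : List Bool) (σ : Equiv.Perm (Fin (p + v.length + 1))) :
    (descWord σ = List.replicate p false ++ v ∨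
      descWord σ = List.replicate (p - 1) false ++ true :: v) ↔ QPred p v σ := by
  have hl1 : (List.replicate p false ++ v).length = (p + v.length + 1) - 1 := by simp
  have hl2 : (List.replicate (p - 1) false ++ true :: v).length = (p + v.length + 1) - 1 := by
    simp; omega
  rw [descWord_eq_iff σ _ hl1, descWord_eq_iff σ _ hl2]
  constructor
  · rintro (h | h)
    · constructor
      · intro i hi
        have := h i (by omega)
        rw [List.getD_append _ _ _ _ (by simp only [List.length_replicate]; omega)] at this
        rw [getD_replicate'] at this
        exact of_decide_eq_false this.symm
      · intro i hi
        have := h (p + i) (by omega)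
        rw [List.getD_append_right _ _ _ _ (by simp only [List.length_replicate]; omega)] at this
        simp only [List.length_replicate, Nat.add_sub_cancel_left] at this
        exact this.symm
    · constructor
      · intro i hi
        have := h i (by omega)
        rw [List.getD_append _ _ _ _ (by simp only [List.length_replicate]; omega)] at this
        rw [getD_replicate'] at this
        exact of_decide_eq_false this.symm
      · intro i hi
        have := h (p + i) (by omega)
        rw [List.getD_append_right _ _ _ _ (by simp only [List.length_replicate]; omega)] at this
        simp only [List.length_replicate] at this
        have he : p + i - (p - 1) = i + 1 := by omega
        rw [he] at this
        simpa using this.symm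
  · rintro ⟨q1, q2⟩
    by_cases hb : σ ⟨p, by omega⟩ < σ ⟨p - 1, by omega⟩
    · right
      intro i hi
      rcases Nat.lt_trichotomy i (p - 1) with h' | h' | h'
      · rw [List.getD_append _ _ _ _ (by simp only [List.length_replicate]; omega)]
        rw [getD_replicate']
        exact (decide_eq_false (q1 i h')).symm
      · subst h'
        rw [List.getD_append_right _ _ _ _ (by simp only [List.length_replicate]; exact le_rfl)]
        have e1 : (⟨p - 1 + 1, by omega⟩ : Fin (p + v.length + 1)) = ⟨p, by omega⟩ :=
          Fin.mk_eq_mk.mpr (by omega)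
        rw [e1]
        simpa using (decide_eq_true hb).symm
      · obtain ⟨j, rfl⟩ : ∃ j, i = p + j := ⟨i - p, by omega⟩
        rw [List.getD_append_right _ _ _ _ (by simp only [List.length_replicate]; omega)]
        simp only [List.length_replicate]
        have he : p + j - (p - 1) = j + 1 := by omega
        rw [he]
        have hj : j < v.length := by omega
        simpa using (q2 j hj).symm
    · left
      intro i hi
      rcases Nat.lt_trichotomy i (p - 1) with h' | h' | h'
      · rw [List.getD_append _ _ _ _ (by simp only [List.length_replicate]; omega)]
        rw [getD_replicate']
        exact (decide_eq_false (q1 i h')).symm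
      · subst h'
        rw [List.getD_append _ _ _ _ (by simp only [List.length_replicate]; omega)]
        rw [getD_replicate']
        have e1 : (⟨p - 1 + 1, by omega⟩ : Fin (p + v.length + 1)) = ⟨p, by omega⟩ :=
          Fin.mk_eq_mk.mpr (by omega)
        rw [e1]
        exact (decide_eq_false hb).symm
      · obtain ⟨j, rfl⟩ : ∃ j, i = p + j := ⟨i - p, by omega⟩
        rw [List.getD_append_right _ _ _ _ (by simp only [List.length_replicate]; omega)]
        simp only [List.length_replicate, Nat.add_sub_cancel_left]
        have hj : j < v.length := by omega
        exact (q2 j hj).symm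

lemma splitLemma (p : ℕ) (hp : 1 ≤ p) (v : List Bool) :
    desNum (List.replicate p false ++ v) + desNum (List.replicate (p - 1) false ++ true :: v)
      = Nat.choose (p + v.length + 1) p * desNum v := by
  have hl1 : (List.replicate p false ++ v).length + 1 = p + v.length + 1 := by simp
  have hl2 : (List.replicate (p - 1) false ++ true :: v).length + 1 = p + v.length + 1 := by
    simp; omega
  rw [desNum_eq _ _ hl1, desNum_eq _ _ hl2]
  have hne : (List.replicate p false ++ v) ≠ (List.replicate (p - 1) false ++ true :: v) := by
    intro heq
    have : (List.replicate p false ++ v).getD (p-1) false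
        = (List.replicate (p - 1) false ++ true :: v).getD (p-1) false := by rw [heq]
    rw [List.getD_append _ _ _ _ (by simp only [List.length_replicate]; omega),
      List.getD_append_right _ _ _ _ (by simp only [List.length_replicate]; exact le_rfl),
      getD_replicate'] at this
    simp at this
  have hdisj : Disjoint (fun σ : Equiv.Perm (Fin (p + v.length + 1)) =>
      descWord σ = List.replicate p false ++ v)
      (fun σ => descWord σ = List.replicate (p - 1) false ++ true :: v) := by
    intro P hP1 hP2 σ hσ
    exact absurd ((hP1 σ hσ).symm.trans (hP2 σ hσ)) hne
  rw [Nat.card_eq_fintype_card, Nat.card_eq_fintype_card,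
    ← Fintype.card_subtype_or_disjoint _ _ hdisj]
  have : Fintype.card {σ : Equiv.Perm (Fin (p + v.length + 1)) //
        descWord σ = List.replicate p false ++ v ∨
        descWord σ = List.replicate (p - 1) false ++ true :: v}
      = Nat.card {σ : Equiv.Perm (Fin (p + v.length + 1)) // QPred p v σ} := by
    rw [Nat.card_eq_fintype_card]
    exact Fintype.card_congr (Equiv.subtypeEquivRight (or_iff_QPred p hp v))
  rw [this, card_QPred p v hp]

lemma abPow_length (r n : ℕ) (hr : 1 ≤ r) : (abPow r n).length = r * n := by
  induction n with
  | zero => simp [abPow]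
  | succ n ih =>
    rw [abPow, List.replicate_succ, List.flatten_cons]
    simp only [List.length_append]
    rw [← abPow, ih]
    simp only [List.length_append, List.length_replicate, List.length_cons, List.length_nil]
    rw [Nat.mul_succ]
    omega

lemma abPow_succ (r n : ℕ) :
    abPow r (n + 1) = (List.replicate (r - 1) false ++ [true]) ++ abPow r n := by
  rw [abPow, List.replicate_succ, List.flatten_cons, abPow]

lemma word_succ (r n j : ℕ) (hr : 1 ≤ r) (hj : j < n) (w : List Bool) :
    List.replicate (r * (n - j) - 1) false ++ true :: (abPow r j ++ w)
      = List.replicate (r * (n - (j + 1))) false ++ (abPow r (j + 1) ++ w) := by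
  have h1 : r * (n - j) = r * (n - (j + 1)) + r := by
    rw [show n - j = (n - (j + 1)) + 1 from by omega, Nat.mul_add, Nat.mul_one]
  have h2 : r * (n - j) - 1 = r * (n - (j + 1)) + (r - 1) := by omega
  rw [h2, abPow_succ, List.replicate_add, List.append_assoc]
  simp

/-- Telescoping: the alternating sum identity. -/
lemma telescope (r : ℕ) (hr : 1 ≤ r) (w : List Bool) (n : ℕ) :
    ∀ d j, j + d = n →
      (desNum (List.replicate (r * (n - j)) false ++ (abPow r j ++ w)) : ℤ)
        = ∑ m ∈ Finset.Icc j n, (-1 : ℤ) ^ (m - j) *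
            Nat.choose (w.length + 1 + r * n) (w.length + 1 + r * m) * desNum (abPow r m ++ w) := by
  intro d
  induction d with
  | zero =>
    intro j hj
    have hj' : j = n := by omega
    subst hj'
    rw [Finset.Icc_self, Finset.sum_singleton]
    simp only [Nat.sub_self, Nat.mul_zero, List.replicate, List.nil_append, pow_zero, one_mul]
    rw [Nat.choose_self]
    simp
  | succ d ih =>
    intro j hj
    have hjn : j < n := by omega
    have hstep := splitLemma (r * (n - j)) (by
        have : 1 ≤ n - j := by omega
        calc 1 ≤ r * 1 := by omega
        _ ≤ r * (n - j) := Nat.mul_le_mul_left r this) (abPow r j ++ w)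
    rw [word_succ r n j hr hjn w] at hstep
    have hlen : (abPow r j ++ w).length = r * j + w.length := by
      rw [List.length_append, abPow_length r j hr]
    have hNeq : r * (n - j) + (abPow r j ++ w).length + 1 = w.length + 1 + r * n := by
      rw [hlen]
      have : r * n = r * (n - j) + r * j := by
        rw [← Nat.mul_add]; congr 1; omega
      omega
    rw [hNeq] at hstep
    have hchoose : Nat.choose (w.length + 1 + r * n) (r * (n - j))
        = Nat.choose (w.length + 1 + r * n) (w.length + 1 + r * j) := by
      have h1 : r * n = r * (n - j) + r * j := by rw [← Nat.mul_add]; congr 1; omega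
      have h2 : w.length + 1 + r * n - (r * (n - j)) = w.length + 1 + r * j := by omega
      rw [← h2]
      exact (Nat.choose_symm (by omega)).symm
    rw [hchoose] at hstep
    -- cast to ℤ and use IH
    have ihj := ih (j + 1) (by omega)
    have hIcc : Finset.Icc j n = insert j (Finset.Icc (j + 1) n) := by
      ext x; simp only [Finset.mem_Icc, Finset.mem_insert]; omega
    rw [hIcc, Finset.sum_insert (by simp only [Finset.mem_Icc]; omega)]
    have hsum : ∑ m ∈ Finset.Icc (j + 1) n, (-1 : ℤ) ^ (m - j) *
          Nat.choose (w.length + 1 + r * n) (w.length + 1 + r * m) * desNum (abPow r m ++ w)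
        = - ∑ m ∈ Finset.Icc (j + 1) n, (-1 : ℤ) ^ (m - (j + 1)) *
            Nat.choose (w.length + 1 + r * n) (w.length + 1 + r * m) * desNum (abPow r m ++ w) := by
      rw [← Finset.sum_neg_distrib]
      apply Finset.sum_congr rfl
      intro m hm
      have hm' : j + 1 ≤ m := (Finset.mem_Icc.mp hm).1
      rw [show m - j = (m - (j + 1)) + 1 from by omega, pow_succ]
      ring
    rw [hsum, ← ihj]
    have := congrArg (fun x : ℕ => (x : ℤ)) hstep
    push_cast at this ⊢
    simp only [Nat.sub_self, pow_zero, one_mul] at *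
    omega

/-- For `r ≥ 1` and an ab-word `w` of degree `k−1`,
`∑ₙ (−1)ⁿ β((a^{r−1}b)ⁿ·w) x^{rn+k}/(rn+k)!
  = (∑ₙ β(a^{rn}·w) x^{rn+k}/(rn+k)!) / (∑ₙ x^{rn}/(rn)!)`,
stated with the denominator multiplied across. -/
theorem stmt_9 (r : ℕ) (hr : 1 ≤ r) (w : List Bool) :
    (PowerSeries.mk fun N =>
        if w.length + 1 ≤ N ∧ r ∣ N - (w.length + 1) then
          (-1 : ℚ) ^ ((N - (w.length + 1)) / r) *
            desNum (abPow r ((N - (w.length + 1)) / r) ++ w) / Nat.factorial N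
        else 0) *
      (PowerSeries.mk fun N => if r ∣ N then (1 : ℚ) / Nat.factorial N else 0) =
    PowerSeries.mk fun N =>
      if w.length + 1 ≤ N ∧ r ∣ N - (w.length + 1) then
        (desNum (List.replicate (r * ((N - (w.length + 1)) / r)) false ++ w) : ℚ) /
          Nat.factorial N
      else 0 := by
  apply PowerSeries.ext
  intro N
  rw [PowerSeries.coeff_mul, Finset.Nat.sum_antidiagonal_eq_sum_range_succ_mk]
  simp only [PowerSeries.coeff_mk]
  by_cases hcond : w.length + 1 ≤ N ∧ r ∣ N - (w.length + 1)
  · rw [if_pos hcond]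
    obtain ⟨hkN, hdvd⟩ := hcond
    set k := w.length + 1 with hk
    set n := (N - k) / r with hn
    have hrn : r * n = N - k := Nat.mul_div_cancel' hdvd
    have hN : N = k + r * n := by omega
    have hsub : (Finset.range (n + 1)).image (fun m => k + r * m) ⊆ Finset.range (N + 1) := by
      intro x hx
      obtain ⟨m, hm, rfl⟩ := Finset.mem_image.mp hx
      have hm' : m ≤ n := by simpa using Nat.lt_succ_iff.mp (Finset.mem_range.mp hm)
      have : r * m ≤ r * n := Nat.mul_le_mul_left r hm'
      rw [Finset.mem_range]
      omega
    rw [← Finset.sum_subset hsub ?vanish]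
    case vanish =>
      intro i hiN hi
      by_cases h1 : k ≤ i ∧ r ∣ i - k
      · exfalso
        apply hi
        rw [Finset.mem_image]
        have hiN' : i ≤ N := Nat.lt_succ_iff.mp (Finset.mem_range.mp hiN)
        obtain ⟨hki, m, hmeq⟩ := h1
        refine ⟨(i - k) / r, ?_, ?_⟩
        · rw [Finset.mem_range, Nat.lt_succ_iff, hmeq, Nat.mul_div_cancel_left m (by omega)]
          have h3 : r * m ≤ r * n := by omega
          exact Nat.le_of_mul_le_mul_left h3 (by omega)
        · rw [hmeq, Nat.mul_div_cancel_left m (by omega)]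
          omega
      · rw [if_neg h1, zero_mul]
    rw [Finset.sum_image (fun a _ b _ hab => by
      have : r * a = r * b := by omega
      exact Nat.eq_of_mul_eq_mul_left (by omega) this)]
    -- simplify each term
    have hfact : ∀ x : ℕ, ((Nat.factorial x : ℚ)) ≠ 0 :=
      fun x => Nat.cast_ne_zero.mpr (Nat.factorial_ne_zero x)
    have hterm : ∀ m ∈ Finset.range (n + 1),
        (if k ≤ k + r * m ∧ r ∣ k + r * m - k then
            (-1 : ℚ) ^ ((k + r * m - k) / r) * desNum (abPow r ((k + r * m - k) / r) ++ w)
              / Nat.factorial (k + r * m)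
          else 0) *
        (if r ∣ N - (k + r * m) then (1 : ℚ) / Nat.factorial (N - (k + r * m)) else 0)
        = (-1 : ℚ) ^ m * (Nat.choose N (k + r * m)) * desNum (abPow r m ++ w) / N.factorial := by
      intro m hm
      have hm' : m ≤ n := Nat.lt_succ_iff.mp (Finset.mem_range.mp hm)
      have hsplit : r * n = r * m + r * (n - m) := by
        rw [← Nat.mul_add]; congr 1; omega
      have hc1 : k ≤ k + r * m ∧ r ∣ k + r * m - k := by
        constructor
        · omega
        · rw [Nat.add_sub_cancel_left]; exact ⟨m, rfl⟩
      have he : (k + r * m - k) / r = m := by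
        rw [Nat.add_sub_cancel_left, Nat.mul_div_cancel_left m (by omega)]
      have hc2 : N - (k + r * m) = r * (n - m) := by omega
      have hle : k + r * m ≤ N := by omega
      rw [if_pos hc1, he, if_pos (hc2 ▸ ⟨n - m, rfl⟩ : r ∣ N - (k + r * m)),
        Nat.cast_choose ℚ hle, hc2]
      field_simp
    rw [Finset.sum_congr rfl hterm]
    rw [← Finset.sum_div]
    -- telescope
    have htel := telescope r hr w n n 0 (by omega)
    have hIcc : Finset.Icc 0 n = Finset.range (n + 1) := by
      ext x; simp [Nat.lt_succ_iff]
    rw [hIcc] at htel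
    have htelq : ((desNum (List.replicate (r * n) false ++ (abPow r 0 ++ w)) : ℚ))
        = ∑ m ∈ Finset.range (n + 1), (-1 : ℚ) ^ m *
            Nat.choose (w.length + 1 + r * n) (w.length + 1 + r * m) * desNum (abPow r m ++ w) := by
      exact_mod_cast congrArg (fun z : ℤ => (z : ℚ)) htel
    have habz : abPow r 0 ++ w = w := by simp [abPow]
    rw [habz] at htelq
    simp only [← hk] at htelq
    simp only [← hN] at htelq
    rw [← htelq]
  · rw [if_neg hcond]
    apply Finset.sum_eq_zero
    intro i hi
    by_cases h1 : w.length + 1 ≤ i ∧ r ∣ i - (w.length + 1)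
    · by_cases h2 : r ∣ N - i
      · exfalso
        apply hcond
        have hiN : i ≤ N := Nat.lt_succ_iff.mp (Finset.mem_range.mp hi)
        refine ⟨le_trans h1.1 hiN, ?_⟩
        have : N - (w.length + 1) = (i - (w.length + 1)) + (N - i) := by omega
        rw [this]
        exact Nat.dvd_add h1.2 h2
      · rw [if_neg h2, mul_zero]
    · rw [if_neg h1, zero_mul]
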